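/- Let P ⊆ ℝⁿ be a nonempty polyhedron with dim P = d, and let d' be an integer with 0 ≤ d' < d. Define, for open subsets V₀,…,V_k of P, the bounded-depth terms B₀(V₀) = V₀ ∪ int_P(P \ V₀) and B_k(V₀,…,V_k) = V_k ∪ (V_k ⇨ B_{k−1}(V₀,…,V_{k−1})), where U ⇨ W = int_P((P \ U) ∪ W) and int_P is interior in the subspace P. Then there exist open subpolyhedra U₀,…,U_{d'} of P with B_{d'}(U₀,…,U_{d'}) ≠ P. -/

import Mathlib

open Set

/-- A polytope in ℝⁿ: the convex hull of a finite set of points. -/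
def IsPolytope {n : ℕ} (s : Set (Fin n → ℝ)) : Prop :=
  ∃ V : Finset (Fin n → ℝ), s = convexHull ℝ (V : Set (Fin n → ℝ))

/-- A polyhedron in ℝⁿ: a finite union of polytopes. -/
def IsPolyhedron {n : ℕ} (P : Set (Fin n → ℝ)) : Prop :=
  ∃ S : Set (Set (Fin n → ℝ)), S.Finite ∧ (∀ s ∈ S, IsPolytope s) ∧ P = ⋃₀ S

/-- A simplex in ℝⁿ: the convex hull of a nonempty finite affinely independent set. -/
def IsSimplex {n : ℕ} (s : Set (Fin n → ℝ)) : Prop :=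
  ∃ V : Finset (Fin n → ℝ), V.Nonempty ∧
    AffineIndependent ℝ (fun x : {x : Fin n → ℝ // x ∈ V} => x.val) ∧
    s = convexHull ℝ (V : Set (Fin n → ℝ))

/-- `IsFaceOf s t`: `t` is a simplex with vertex set `W` and `s` is the convex hull
of a nonempty subset of `W`. -/
def IsFaceOf {n : ℕ} (s t : Set (Fin n → ℝ)) : Prop :=
  ∃ W V : Finset (Fin n → ℝ), W.Nonempty ∧
    AffineIndependent ℝ (fun x : {x : Fin n → ℝ // x ∈ W} => x.val) ∧
    t = convexHull ℝ (W : Set (Fin n → ℝ)) ∧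
    V.Nonempty ∧ V ⊆ W ∧ s = convexHull ℝ (V : Set (Fin n → ℝ))

/-- A triangulation in ℝⁿ: a finite set of simplices closed under taking faces, such that
any two members intersect in a common face (or not at all). -/
structure IsTriangulation {n : ℕ} (K : Set (Set (Fin n → ℝ))) : Prop where
  finite : K.Finite
  simplex : ∀ s ∈ K, IsSimplex s
  face_mem : ∀ s ∈ K, ∀ t, IsFaceOf t s → t ∈ K
  inter : ∀ s ∈ K, ∀ t ∈ K, s ∩ t = ∅ ∨ (IsFaceOf (s ∩ t) s ∧ IsFaceOf (s ∩ t) t)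

/-- A set of simplices closed under taking faces. -/
def FaceClosed {n : ℕ} (D : Set (Set (Fin n → ℝ))) : Prop :=
  ∀ s ∈ D, ∀ t, IsFaceOf t s → t ∈ D

/-- A `K`-definable polyhedron: the union of a face-closed subset of `K`. -/
def SigmaDefinable {n : ℕ} (K : Set (Set (Fin n → ℝ))) (C : Set (Fin n → ℝ)) : Prop :=
  ∃ D ⊆ K, FaceClosed D ∧ C = ⋃₀ D

/-- A `K`-definable open set: the complement in `|K| = ⋃₀ K` of a `K`-definable polyhedron. -/
def SigmaDefOpen {n : ℕ} (K : Set (Set (Fin n → ℝ))) (O : Set (Fin n → ℝ)) : Prop :=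
  ∃ C, SigmaDefinable K C ∧ O = ⋃₀ K \ C

/-- The open star of a simplex `s` in a triangulation `K`. -/
def openStar {n : ℕ} (K : Set (Set (Fin n → ℝ))) (s : Set (Fin n → ℝ)) : Set (Fin n → ℝ) :=
  ⋃ t ∈ {t ∈ K | s ⊆ t}, intrinsicInterior ℝ t

/-- The interior of `S` in the subspace topology of `P`, viewed as a subset of ℝⁿ. -/
def intSub {n : ℕ} (P S : Set (Fin n → ℝ)) : Set (Fin n → ℝ) :=
  Subtype.val '' interior (Subtype.val ⁻¹' S : Set P)

/-- An open subpolyhedron of a polyhedron `P`: a subset of `P` whose complement in `P`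
is a polyhedron. -/
def IsOpenSubpoly {n : ℕ} (P O : Set (Fin n → ℝ)) : Prop :=
  O ⊆ P ∧ IsPolyhedron (P \ O)

/-- `s` is a simplex with exactly `k` (affinely independent) vertices. -/
def SimplexWithCard {n : ℕ} (s : Set (Fin n → ℝ)) (k : ℕ) : Prop :=
  ∃ V : Finset (Fin n → ℝ), V.Nonempty ∧
    AffineIndependent ℝ (fun x : {x : Fin n → ℝ // x ∈ V} => x.val) ∧
    s = convexHull ℝ (V : Set (Fin n → ℝ)) ∧ V.card = k

/-- `P` contains a simplex with `d+1` affinely independent vertices, and no simplex with more;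
i.e. the polyhedron `P` has dimension exactly `d`. -/
def PolyDimEq {n : ℕ} (P : Set (Fin n → ℝ)) (d : ℕ) : Prop :=
  (∃ V : Finset (Fin n → ℝ), V.Nonempty ∧
      AffineIndependent ℝ (fun x : {x : Fin n → ℝ // x ∈ V} => x.val) ∧
      convexHull ℝ (V : Set (Fin n → ℝ)) ⊆ P ∧ V.card = d + 1) ∧
  (∀ V : Finset (Fin n → ℝ),
      AffineIndependent ℝ (fun x : {x : Fin n → ℝ // x ∈ V} => x.val) →
      convexHull ℝ (V : Set (Fin n → ℝ)) ⊆ P → V.card ≤ d + 1)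

/-- The polyhedron `P` has dimension at most `d`. -/
def PolyDimLE {n : ℕ} (P : Set (Fin n → ℝ)) (d : ℕ) : Prop :=
  ∀ V : Finset (Fin n → ℝ),
    AffineIndependent ℝ (fun x : {x : Fin n → ℝ // x ∈ V} => x.val) →
    convexHull ℝ (V : Set (Fin n → ℝ)) ⊆ P → V.card ≤ d + 1

/-- The triangulation `K` has combinatorial dimension exactly `d`. -/
def TriangDimEq {n : ℕ} (K : Set (Set (Fin n → ℝ))) (d : ℕ) : Prop :=
  (∃ s ∈ K, SimplexWithCard s (d + 1)) ∧
  (∀ s ∈ K, ∀ k, SimplexWithCard s k → k ≤ d + 1)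

/-- The bounded-depth terms: `bdTerm P k V = V k ∪ (V k ⇨ bdTerm P (k-1) V)`,
where `U ⇨ W = int_P ((P \ U) ∪ W)` is the Heyting implication of open subsets of `P`. -/
def bdTerm {n : ℕ} (P : Set (Fin n → ℝ)) :
    (k : ℕ) → (Fin (k + 1) → Set (Fin n → ℝ)) → Set (Fin n → ℝ)
  | 0, V => V 0 ∪ intSub P (P \ V 0)
  | k + 1, V => V (Fin.last (k + 1)) ∪
      intSub P ((P \ V (Fin.last (k + 1))) ∪ bdTerm P k (fun i => V i.castSucc))

/-- The finite poset `A` has depth exactly `d`: it has a chain of cardinality `d+1`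
and no longer chain. -/
def depthEq (A : Type) [PartialOrder A] (d : ℕ) : Prop :=
  (∃ C : Finset A, IsChain (· ≤ ·) (C : Set A) ∧ C.card = d + 1) ∧
  (∀ C : Finset A, IsChain (· ≤ ·) (C : Set A) → C.card ≤ d + 1)

/-- An upper set of the poset `(K, ⊆)`. -/
def UpperSetOf {n : ℕ} (K U : Set (Set (Fin n → ℝ))) : Prop :=
  U ⊆ K ∧ ∀ s ∈ U, ∀ t ∈ K, s ⊆ t → t ∈ U

/-- The map sending an upper set of a triangulation to the union of the relative
interiors of its members. -/
def gammaUp {n : ℕ} (U : Set (Set (Fin n → ℝ))) : Set (Fin n → ℝ) :=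
  ⋃ s ∈ U, intrinsicInterior ℝ s
open Filter Topology

/-- Convex hull of the first `j+1` vertices. -/
def hullUpTo {n d : ℕ} (v : Fin (d + 1) → (Fin n → ℝ)) (j : ℕ) : Set (Fin n → ℝ) :=
  convexHull ℝ (v '' {i | (i : ℕ) ≤ j})

lemma hullUpTo_mono {n d : ℕ} (v : Fin (d + 1) → (Fin n → ℝ)) {j j' : ℕ} (h : j ≤ j') :
    hullUpTo v j ⊆ hullUpTo v j' :=
  convexHull_mono (Set.image_mono fun _ hi => le_trans hi h)

set_option maxHeartbeats 1000000 in
lemma exists_coord {n d : ℕ} {v : Fin (d + 1) → (Fin n → ℝ)} (hv : AffineIndependent ℝ v)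
    (m : Fin (d + 1)) :
    ∃ f : (Fin n → ℝ) →ᵃ[ℝ] ℝ, f (v m) = 1 ∧ ∀ i, i ≠ m → f (v i) = 0 := by
  obtain ⟨T, hvT, hTai, hTspan⟩ := exists_subset_affineIndependent_affineSpan_eq_top hv.range
  let b : AffineBasis T ℝ (Fin n → ℝ) := ⟨fun p => p, hTai, by rwa [Subtype.range_coe]⟩
  have hmem : ∀ i, v i ∈ T := fun i => hvT (Set.mem_range_self i)
  have hb : ∀ p : T, b p = ↑p := fun p => rfl
  refine ⟨b.coord ⟨v m, hmem m⟩, ?_, ?_⟩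
  · exact b.coord_apply_eq ⟨v m, hmem m⟩
  · intro i him
    have hne : (⟨v m, hmem m⟩ : T) ≠ ⟨v i, hmem i⟩ := by
      simp only [ne_eq, Subtype.mk_eq_mk]
      exact fun h => him (hv.injective h).symm
    have h2 := b.coord_apply_ne hne
    rw [hb] at h2
    exact h2

lemma hull_escape {n d : ℕ} {v : Fin (d + 1) → (Fin n → ℝ)} (hv : AffineIndependent ℝ v)
    {j : ℕ} (hj : j + 1 ≤ d) {x : Fin n → ℝ} (hx : x ∈ hullUpTo v j) {t : ℝ}
    (ht : t ∈ Set.Ioc (0 : ℝ) 1) :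
    AffineMap.lineMap x (v ⟨j + 1, by omega⟩) t ∈ hullUpTo v (j + 1) ∧
      AffineMap.lineMap x (v ⟨j + 1, by omega⟩) t ∉ hullUpTo v j := by
  have hvmem : v ⟨j + 1, by omega⟩ ∈ hullUpTo v (j + 1) :=
    subset_convexHull ℝ _ ⟨⟨j + 1, by omega⟩, by simp, rfl⟩
  constructor
  · exact (convex_convexHull ℝ _).lineMap_mem (hullUpTo_mono v (Nat.le_succ j) hx) hvmem
      ⟨ht.1.le, ht.2⟩
  · obtain ⟨f, hf1, hf0⟩ := exists_coord hv ⟨j + 1, by omega⟩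
    have hzero : ∀ y ∈ hullUpTo v j, f y = 0 := by
      intro y hy
      have h1 : f y ∈ f '' hullUpTo v j := Set.mem_image_of_mem _ hy
      rw [hullUpTo, AffineMap.image_convexHull] at h1
      have h2 : f '' (v '' {i | (i : ℕ) ≤ j}) ⊆ {0} := by
        rintro _ ⟨_, ⟨i, hi, rfl⟩, rfl⟩
        refine hf0 i fun h => ?_
        rw [h] at hi
        simp only [Set.mem_setOf_eq] at hi
        omega
      have := convexHull_mono h2 h1
      rwa [convexHull_singleton, Set.mem_singleton_iff] at this
    intro hmem
    have h1 := hzero _ hmem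
    rw [AffineMap.apply_lineMap, hzero x hx, hf1] at h1
    simp only [AffineMap.lineMap_apply_module, smul_eq_mul, mul_zero, mul_one, zero_add] at h1
    exact absurd h1 (ne_of_gt ht.1)

lemma notMem_intSub {n : ℕ} {P S : Set (Fin n → ℝ)} {x y : Fin n → ℝ}
    (hP : ∀ t ∈ Set.Ioc (0 : ℝ) 1, AffineMap.lineMap x y t ∈ P)
    (hS : ∀ t ∈ Set.Ioc (0 : ℝ) 1, AffineMap.lineMap x y t ∉ S) :
    x ∉ intSub P S := by
  rintro ⟨z, hz, hzx⟩
  have hSx : S ∈ 𝓝[P] (z : Fin n → ℝ) := by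
    rw [← map_nhds_subtype_val]
    exact Filter.mem_map.2 (mem_interior_iff_mem_nhds.1 hz)
  rw [hzx] at hSx
  have htend : Filter.Tendsto (fun t : ℝ => AffineMap.lineMap x y t) (𝓝[>] (0 : ℝ)) (𝓝[P] x) := by
    rw [tendsto_nhdsWithin_iff]
    constructor
    · have hc : Continuous fun t : ℝ => AffineMap.lineMap x y t := AffineMap.lineMap_continuous
      have h0 := hc.tendsto 0
      rw [show AffineMap.lineMap x y (0 : ℝ) = x from AffineMap.lineMap_apply_zero x y] at h0
      exact h0.mono_left nhdsWithin_le_nhds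
    · filter_upwards [Ioc_mem_nhdsGT one_pos] with t ht using hP t ht
  have hev : ∀ᶠ t in 𝓝[>] (0 : ℝ), AffineMap.lineMap x y t ∈ S := htend.eventually hSx
  obtain ⟨t, htS, htIoc⟩ := (hev.and (Ioc_mem_nhdsGT one_pos : ∀ᶠ t in 𝓝[>] (0:ℝ), t ∈ Set.Ioc 0 1)).exists
  exact hS t htIoc htS

lemma isPolyhedron_hullUpTo {n d : ℕ} (v : Fin (d + 1) → (Fin n → ℝ)) (j : ℕ) :
    IsPolyhedron (hullUpTo v j) := by
  refine ⟨{hullUpTo v j}, Set.finite_singleton _, ?_, (Set.sUnion_singleton _).symm⟩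
  intro s hs
  rw [Set.mem_singleton_iff] at hs; subst hs
  refine ⟨Finset.image v (Finset.univ.filter fun i => (i : ℕ) ≤ j), ?_⟩
  unfold hullUpTo
  congr 1
  ext y
  simp

/-- Let `P ⊆ ℝⁿ` be a nonempty polyhedron of dimension exactly `d`, and
let `d' < d`.  Then there are open subpolyhedra `U₀, …, U_{d'}` of `P` on which the
bounded-depth term `B_{d'}` does not evaluate to `P`. -/
theorem bd_fails_of_lt_dim {n d d' : ℕ} (P : Set (Fin n → ℝ)) (hP : IsPolyhedron P)
    (hne : P.Nonempty) (hdim : PolyDimEq P d) (hd' : d' < d) :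
    ∃ U : Fin (d' + 1) → Set (Fin n → ℝ),
      (∀ i, IsOpenSubpoly P (U i)) ∧ bdTerm P d' U ≠ P := by
  obtain ⟨⟨V, hVne, hVai, hVsub, hVcard⟩, -⟩ := hdim
  let e : Fin (d + 1) ≃ {x // x ∈ V} := (finCongr hVcard.symm).trans V.equivFin.symm
  let v : Fin (d + 1) → (Fin n → ℝ) := fun i => (e i : Fin n → ℝ)
  have hvai : AffineIndependent ℝ v := hVai.comp_embedding e.toEmbedding
  have hvV : ∀ i, v i ∈ (V : Set (Fin n → ℝ)) := fun i => (e i).2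
  have hGP : ∀ j, hullUpTo v j ⊆ P := by
    intro j
    refine subset_trans (convexHull_mono ?_) hVsub
    rintro _ ⟨i, -, rfl⟩
    exact hvV i
  refine ⟨fun i => P \ hullUpTo v (d' - (i : ℕ)), fun i => ⟨Set.diff_subset, ?_⟩, ?_⟩
  · rw [Set.diff_diff_cancel_left (hGP _)]
    exact isPolyhedron_hullUpTo v _
  · -- the key induction
    have key : ∀ k, ∀ hk : k ≤ d', ∀ x ∈ hullUpTo v (d' - k),
        x ∉ bdTerm P k (fun i : Fin (k + 1) =>
          P \ hullUpTo v (d' - ((⟨(i : ℕ), Nat.lt_of_lt_of_le i.isLt (Nat.succ_le_succ hk)⟩ :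
            Fin (d' + 1)) : ℕ))) := by
      intro k
      induction k with
      | zero =>
        intro hk x hx
        rw [Nat.sub_zero] at hx
        rintro (h | h)
        · exact h.2 hx
        · have hjd : d' + 1 ≤ d := hd'
          exact notMem_intSub (y := v ⟨d' + 1, by omega⟩)
            (fun t ht => hGP _ (hull_escape hvai hjd hx ht).1)
            (fun t ht hmem => (hull_escape hvai hjd hx ht).2
              (by_contra fun hy => hmem.2 ⟨hmem.1, hy⟩)) h
      | succ k ih =>
        intro hk x hx
        have hk' : k ≤ d' := Nat.le_of_succ_le hk
        simp only [bdTerm]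
        rintro (h | h)
        · exact h.2 hx
        · have hjd : (d' - (k + 1)) + 1 ≤ d := by omega
          have hj1 : (d' - (k + 1)) + 1 = d' - k := by omega
          refine notMem_intSub (y := v ⟨(d' - (k + 1)) + 1, by omega⟩)
            (fun t ht => hGP _ (hull_escape hvai hjd hx ht).1) (fun t ht hmem => ?_) h
          rcases hmem with hmem | hmem
          · exact (hull_escape hvai hjd hx ht).2
              (by_contra fun hy => hmem.2 ⟨hmem.1, hy⟩)
          · have h1 : AffineMap.lineMap x (v ⟨(d' - (k + 1)) + 1, by omega⟩) t ∈
                hullUpTo v (d' - k) := by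
              exact hullUpTo_mono v hj1.le (hull_escape hvai hjd hx ht).1
            exact ih hk' _ h1 hmem
    intro heq
    have h0 : v 0 ∈ hullUpTo v (d' - d') :=
      subset_convexHull ℝ _ ⟨0, by simp, rfl⟩
    have hfin := key d' le_rfl (v 0) h0
    rw [show (fun i : Fin (d' + 1) =>
          P \ hullUpTo v (d' - ((⟨(i : ℕ), Nat.lt_of_lt_of_le i.isLt (Nat.succ_le_succ le_rfl)⟩ :
            Fin (d' + 1)) : ℕ))) = fun i : Fin (d' + 1) => P \ hullUpTo v (d' - (i : ℕ))
      from funext fun i => by rfl, heq] at hfin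
    exact hfin (hVsub (subset_convexHull ℝ _ (hvV 0)))
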